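/- Let Σ be a finite alphabet, p ∈ Σ* a fixed word, and L = p·Σ^{≥2}. If u ∈ p·Σ (i.e., u = p·a for some letter a) and u ∼_L u', then u' ∈ p·Σ. -/

import Mathlib

/-- Syntactic congruence of a language `L ⊆ Σ*`. -/
def SynCong {α : Type*} (L : Set (List α)) (u v : List α) : Prop :=
  ∀ x y : List α, (x ++ u ++ y) ∈ L ↔ (x ++ v ++ y) ∈ L

/-- `p·Σ⁺`: words strictly extending `p`. -/
def plusLang {α : Type*} (p : List α) : Set (List α) :=
  {w | ∃ s : List α, s ≠ [] ∧ w = p ++ s}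

/-- `p·Σ^{≥2}`: words extending `p` by at least two letters. -/
def geTwoLang {α : Type*} (p : List α) : Set (List α) :=
  {w | ∃ s : List α, 2 ≤ s.length ∧ w = p ++ s}

/-- `w·Σ*`: words having `w` as a prefix. -/
def starLang {α : Type*} (w : List α) : Set (List α) :=
  {u | ∃ s : List α, u = w ++ s}

theorem stmt2 {α : Type*} [Fintype α] [Nonempty α] (p u u' : List α) (a : α)
    (hu : u = p ++ [a]) (hcong : SynCong (geTwoLang p) u u') :
    ∃ a' : α, u' = p ++ [a'] := by
  obtain ⟨b⟩ := ‹Nonempty α›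
  have h1 : u' ++ [b] ∈ geTwoLang p := by
    have h := (hcong [] [b]).mp
    simp only [List.nil_append] at h
    exact h ⟨[a, b], by simp, by simp [hu]⟩
  have h2 : u' ∉ geTwoLang p := by
    intro h
    have h' := (hcong [] []).mpr
    simp only [List.nil_append, List.append_nil] at h'
    obtain ⟨s, hs2, heq⟩ := h' h
    rw [hu] at heq
    have : ([a] : List α).length = s.length := by rw [List.append_right_injective p heq]
    simp at this; omega
  obtain ⟨s, hs2, heq⟩ := h1
  have hsne : s ≠ [] := by intro h; simp [h] at hs2
  have hsplit : s = s.dropLast ++ [s.getLast hsne] := (List.dropLast_append_getLast hsne).symm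
  have heq2 : u' ++ [b] = (p ++ s.dropLast) ++ [s.getLast hsne] := by
    rw [heq, List.append_assoc, ← hsplit]
  have hmain : u' = p ++ s.dropLast := (List.append_inj' heq2 (by simp)).1
  have hlen : s.dropLast.length = s.length - 1 := List.length_dropLast
  have hone : s.dropLast.length = 1 := by
    by_contra hne
    exact h2 ⟨s.dropLast, by omega, hmain⟩
  obtain ⟨c, hc⟩ := List.length_eq_one_iff.mp hone
  exact ⟨c, by rw [hmain, hc]⟩
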